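/- If S is a semigroup with zero θ and I is an ideal of S such that I^n = {θ} for some n ≥ 1 and the Rees factor semigroup S/I is Malcev nilpotent, then S is Malcev nilpotent. -/

import Mathlib

/-- The Malcev sequences: `(malcevLR x y z n).1 = λ_n`, `(malcevLR x y z n).2 = ρ_n`,
with `λ_0 = x`, `ρ_0 = y`, `λ_{k+1} = λ_k z_k ρ_k`, `ρ_{k+1} = ρ_k z_k λ_k`. -/
def malcevLR {α : Type*} [Mul α] (x y : α) (z : ℕ → α) : ℕ → α × α
  | 0 => (x, y)
  | n+1 => ((malcevLR x y z n).1 * z n * (malcevLR x y z n).2,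
            (malcevLR x y z n).2 * z n * (malcevLR x y z n).1)

/-- A semigroup is Malcev nilpotent of class at most `n` if `λ_n = ρ_n` identically,
with the interlacing elements taken from `S¹ = WithOne S`. -/
def MalcevClassLe (S : Type*) [Semigroup S] (n : ℕ) : Prop :=
  ∀ (a b : S) (c : ℕ → WithOne S),
    (malcevLR (a : WithOne S) (b : WithOne S) c n).1 =
    (malcevLR (a : WithOne S) (b : WithOne S) c n).2


lemma withOne_one_or_coe {S : Type*} (x : WithOne S) : x = 1 ∨ ∃ s : S, x = s := by
  induction x using WithOne.recOneCoe with
  | one => exact Or.inl rfl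
  | coe s => exact Or.inr ⟨s, rfl⟩

lemma malcev_propagate {α : Type*} [Mul α] (x y : α) (z : ℕ → α) (k : ℕ)
    (h : (malcevLR x y z k).1 = (malcevLR x y z k).2) :
    ∀ j, (malcevLR x y z (k+j)).1 = (malcevLR x y z (k+j)).2 := by
  intro j
  induction j with
  | zero => exact h
  | succ j ih => simp [malcevLR, ← Nat.add_assoc, ih]

lemma malcev_map {α β : Type*} [Monoid α] [Monoid β] (F : α →* β)
    (x y : α) (z : ℕ → α) (k : ℕ) :
    malcevLR (F x) (F y) (F ∘ z) k = (F (malcevLR x y z k).1, F (malcevLR x y z k).2) := by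
  induction k with
  | zero => rfl
  | succ k ih => simp [malcevLR, ih, map_mul]

lemma malcev_coe {S : Type*} [Semigroup S] (a b : S) (c : ℕ → WithOne S) (k : ℕ) :
    (∃ l : S, (malcevLR (a : WithOne S) b c k).1 = l) ∧
    (∃ r : S, (malcevLR (a : WithOne S) b c k).2 = r) := by
  induction k with
  | zero => exact ⟨⟨a, rfl⟩, ⟨b, rfl⟩⟩
  | succ k ih =>
    obtain ⟨⟨l, hl⟩, ⟨r, hr⟩⟩ := ih
    rcases withOne_one_or_coe (c k) with hck | ⟨s, hck⟩
    · exact ⟨⟨l * r, by simp [malcevLR, hl, hr, hck]⟩,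
        ⟨r * l, by simp [malcevLR, hl, hr, hck]⟩⟩
    · exact ⟨⟨l * s * r, by simp [malcevLR, hl, hr, hck]⟩,
        ⟨r * s * l, by simp [malcevLR, hl, hr, hck]⟩⟩

/-- Malcev nilpotency. -/
def MalcevNilpotent (S : Type*) [Semigroup S] : Prop :=
  ∃ n, 1 ≤ n ∧ MalcevClassLe S n

/-- A (two-sided, nonempty) ideal of a semigroup. -/
def IsIdeal {S : Type*} [Mul S] (I : Set S) : Prop :=
  I.Nonempty ∧ ∀ s x, x ∈ I → s * x ∈ I ∧ x * s ∈ I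

/-- The Rees congruence associated to an ideal: identify all elements of `I`. -/
def reesCon {S : Type*} [Semigroup S] (I : Set S) (hI : IsIdeal I) : Con S where
  r x y := x = y ∨ (x ∈ I ∧ y ∈ I)
  iseqv := ⟨fun _ => Or.inl rfl,
    fun h => h.elim (fun h => Or.inl h.symm) (fun h => Or.inr ⟨h.2, h.1⟩),
    fun h₁ h₂ => by
      rcases h₁ with h₁ | h₁
      · rwa [h₁]
      · rcases h₂ with h₂ | h₂
        · exact Or.inr ⟨h₁.1, h₂ ▸ h₁.2⟩
        · exact Or.inr ⟨h₁.1, h₂.2⟩⟩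
  mul' := by
    intro a b c d h₁ h₂
    rcases h₁ with h₁ | h₁
    · rcases h₂ with h₂ | h₂
      · exact Or.inl (by rw [h₁, h₂])
      · exact Or.inr ⟨(hI.2 a c h₂.1).1, h₁ ▸ (hI.2 b d h₂.2).1⟩
    · exact Or.inr ⟨(hI.2 c a h₁.1).2, (hI.2 d b h₁.2).2⟩


lemma prod_ofFn_coe_mem {S : Type*} [Semigroup S] {I : Set S} (hI : IsIdeal I) :
    ∀ {k : ℕ} (f : Fin (k+1) → S), (∀ i, f i ∈ I) →
      ∃ x ∈ I, (List.ofFn fun i => ((f i : S) : WithOne S)).prod = (x : WithOne S) := by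
  intro k
  induction k with
  | zero => intro f hf; exact ⟨f 0, hf 0, by simp⟩
  | succ k ih =>
    intro f hf
    obtain ⟨x, hxI, hx⟩ := ih (fun i => f i.succ) (fun i => hf i.succ)
    refine ⟨f 0 * x, (hI.2 (f 0) x hxI).1, ?_⟩
    rw [List.ofFn_succ, List.prod_cons, hx]
    simp

lemma malcev_in_ideal {S : Type*} [Semigroup S] {I : Set S} (hI : IsIdeal I)
    (a b : S) (c : ℕ → WithOne S) (m : ℕ) (l r : S)
    (hl : (malcevLR (a : WithOne S) b c m).1 = l)
    (hr : (malcevLR (a : WithOne S) b c m).2 = r)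
    (hlI : l ∈ I) (hrI : r ∈ I) :
    ∀ k, (∃ f : Fin (k+1) → S, (∀ i, f i ∈ I) ∧
            (malcevLR (a : WithOne S) b c (m+k)).1 =
              (List.ofFn fun i => ((f i : S) : WithOne S)).prod) ∧
         (∃ g : Fin (k+1) → S, (∀ i, g i ∈ I) ∧
            (malcevLR (a : WithOne S) b c (m+k)).2 =
              (List.ofFn fun i => ((g i : S) : WithOne S)).prod) := by
  intro k
  induction k with
  | zero =>
    exact ⟨⟨fun _ => l, fun _ => hlI, by simp [hl]⟩, ⟨fun _ => r, fun _ => hrI, by simp [hr]⟩⟩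
  | succ k ih =>
    obtain ⟨⟨f, hfI, hf⟩, ⟨g, hgI, hg⟩⟩ := ih
    obtain ⟨x, hxI, hx⟩ := prod_ofFn_coe_mem hI f hfI
    obtain ⟨y, hyI, hy⟩ := prod_ofFn_coe_mem hI g hgI
    have hx' : (malcevLR (a : WithOne S) b c (m+k)).1 = x := hf.trans hx
    have hy' : (malcevLR (a : WithOne S) b c (m+k)).2 = y := hg.trans hy
    obtain ⟨x', hx'I, hxc⟩ : ∃ x' ∈ I,
        (malcevLR (a : WithOne S) b c (m+k)).1 * c (m+k) = (x' : WithOne S) := by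
      rcases withOne_one_or_coe (c (m+k)) with hck | ⟨s, hck⟩
      · exact ⟨x, hxI, by simp [hck, hx']⟩
      · exact ⟨x * s, (hI.2 s x hxI).2, by simp [hck, hx']⟩
    obtain ⟨y', hy'I, hyc⟩ : ∃ y' ∈ I,
        (malcevLR (a : WithOne S) b c (m+k)).2 * c (m+k) = (y' : WithOne S) := by
      rcases withOne_one_or_coe (c (m+k)) with hck | ⟨s, hck⟩
      · exact ⟨y, hyI, by simp [hck, hy']⟩
      · exact ⟨y * s, (hI.2 s y hyI).2, by simp [hck, hy']⟩
    refine ⟨⟨Fin.cons x' g, ?_, ?_⟩, ⟨Fin.cons y' f, ?_, ?_⟩⟩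
    · intro i
      refine Fin.cases ?_ ?_ i
      · simpa using hx'I
      · intro j; simpa using hgI j
    · show (malcevLR (a : WithOne S) b c (m+k+1)).1 = _
      simp only [malcevLR]
      rw [hxc, List.ofFn_succ, List.prod_cons]
      simp [hg]
    · intro i
      refine Fin.cases ?_ ?_ i
      · simpa using hy'I
      · intro j; simpa using hfI j
    · show (malcevLR (a : WithOne S) b c (m+k+1)).2 = _
      simp only [malcevLR]
      rw [hyc, List.ofFn_succ, List.prod_cons]
      simp [hf]

/-- `S` is minimal non-nilpotent: not Malcev nilpotent, but every proper subsemigroup and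
every proper Rees factor semigroup is Malcev nilpotent. -/
def MinimalNonNilpotent (S : Type*) [Semigroup S] : Prop :=
  ¬ MalcevNilpotent S ∧
  (∀ T : Subsemigroup S, T ≠ ⊤ → MalcevNilpotent T) ∧
  (∀ (I : Set S) (hI : IsIdeal I), I.Nontrivial →
    MalcevNilpotent (reesCon I hI).Quotient)

/-- `θ` together with the injective family `E g i j ↔ (g; i, j)` realizes a copy of the
inverse Rees matrix semigroup `M⁰(G, n, n; I_n)` as an ideal of `S`. -/
def IsReesIdeal {S : Type*} [Semigroup S] {G : Type*} [Group G] {n : ℕ}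
    (θ : S) (E : G → Fin n → Fin n → S) : Prop :=
  (∀ s : S, s * θ = θ ∧ θ * s = θ) ∧
  Function.Injective (fun p : G × Fin n × Fin n => E p.1 p.2.1 p.2.2) ∧
  (θ ∉ Set.range fun p : G × Fin n × Fin n => E p.1 p.2.1 p.2.2) ∧
  (∀ g h i j k l, E g i j * E h k l = if j = k then E (g * h) i l else θ) ∧
  (∀ (s : S) g i j,
    (s * E g i j = θ ∨ ∃ g' i' j', s * E g i j = E g' i' j') ∧
    (E g i j * s = θ ∨ ∃ g' i' j', E g i j * s = E g' i' j'))

/-- The underlying set of the Rees ideal `M = E(G × n × n) ∪ {θ}`. -/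
def reesIdealSet {S : Type*} {G : Type*} {n : ℕ} (θ : S) (E : G → Fin n → Fin n → S) :
    Set S :=
  (Set.range fun p : G × Fin n × Fin n => E p.1 p.2.1 p.2.2) ∪ {θ}

/-- If `I` is an ideal with `I^n = {θ}` and the Rees factor `S/I` is Malcev nilpotent,
then `S` is Malcev nilpotent. -/
theorem stmt_1 {S : Type*} [Semigroup S] (θ : S)
    (hθ : ∀ s : S, s * θ = θ ∧ θ * s = θ)
    (I : Set S) (hI : IsIdeal I) (hθI : θ ∈ I) (n : ℕ) (hn : 1 ≤ n)
    (hIn : ∀ f : Fin n → S, (∀ i, f i ∈ I) →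
      (List.ofFn fun i => ((f i : S) : WithOne S)).prod = (θ : WithOne S))
    (hq : MalcevNilpotent (reesCon I hI).Quotient) :
    MalcevNilpotent S := by
  obtain ⟨m, hm1, hqm⟩ := hq
  obtain ⟨n', rfl⟩ : ∃ n', n = n' + 1 := ⟨n - 1, by omega⟩
  refine ⟨m + (n' + 1), by omega, ?_⟩
  intro a b c
  set Q := (reesCon I hI).Quotient
  let φ : S →ₙ* Q := ⟨fun s => (s : Q), fun x y => rfl⟩
  let F : WithOne S →* WithOne Q := WithOne.mapMulHom φ
  have key : F (malcevLR (a : WithOne S) b c m).1 = F (malcevLR (a : WithOne S) b c m).2 := by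
    have h := hqm (φ a) (φ b) (F ∘ c)
    have hmap := malcev_map F (a : WithOne S) (b : WithOne S) c m
    have hFa : F (a : WithOne S) = ((φ a : Q) : WithOne Q) := WithOne.mapMulHom_coe φ a
    have hFb : F (b : WithOne S) = ((φ b : Q) : WithOne Q) := WithOne.mapMulHom_coe φ b
    rw [hFa, hFb] at hmap
    rw [hmap] at h
    exact h
  obtain ⟨⟨l, hl⟩, ⟨r, hr⟩⟩ := malcev_coe a b c m
  rw [hl, hr] at key
  have key' : ((φ l : Q) : WithOne Q) = ((φ r : Q) : WithOne Q) := by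
    rwa [WithOne.mapMulHom_coe, WithOne.mapMulHom_coe] at key
  have hlr : (reesCon I hI) l r := by
    have : (l : Q) = (r : Q) := WithOne.coe_inj.mp key'
    exact (Con.eq _).mp this
  rcases hlr with heq | ⟨hlI, hrI⟩
  · exact malcev_propagate _ _ c m (by rw [hl, hr, heq]) (n' + 1)
  · obtain ⟨⟨f, hfI, hf⟩, ⟨g, hgI, hg⟩⟩ :=
      malcev_in_ideal hI a b c m l r hl hr hlI hrI n'
    have hL : (malcevLR (a : WithOne S) b c (m + n')).1 = (θ : WithOne S) := by
      rw [hf]; exact hIn f hfI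
    have hR : (malcevLR (a : WithOne S) b c (m + n')).2 = (θ : WithOne S) := by
      rw [hg]; exact hIn g hgI
    have := malcev_propagate (a : WithOne S) b c (m + n') (hL.trans hR.symm) 1
    simpa [Nat.add_assoc] using this
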